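/- arXiv:1501.05404 — 2 statements merged into one kernel-verified Lean document; each statement's English description precedes it below -/
import Mathlib

section
/- Let X be a Hausdorff uniform space and let μ ∈ M⁺(X) be a positive continuous linear functional on UCb(X). Then for all uniformly continuous functions f, h : X → ℝ one has |(Fμ)(f) − (Fμ)(h)|² ≤ 2⟨μ,1⟩ · (⟨μ,1⟩ − Re((Fμ)(f−h))), where (Fμ)(f) = ⟨μ, e^{if}⟩. -/
open Complex

noncomputable section

/-- The function `t ↦ e^{it}` is uniformly continuous on `ℝ`. -/
lemma uniformContinuous_exp_mul_I :
    UniformContinuous fun t : ℝ => Complex.exp (t * Complex.I) := by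
  rw [Metric.uniformContinuous_iff]
  intro ε hε
  refine ⟨min 1 (ε / 2), by positivity, fun {a b} h => ?_⟩
  have hab1 : |a - b| ≤ 1 := by
    have := (lt_min_iff.mp (by simpa [Real.dist_eq] using h)).1
    linarith [abs_nonneg (a - b), this]
  have key : ‖Complex.exp ((↑(a - b)) * Complex.I) - 1‖ ≤ 2 * |a - b| := by
    have h1 : ‖(↑(a - b) : ℂ) * Complex.I‖ = |a - b| := by
      rw [norm_mul, Complex.norm_I, mul_one, Complex.norm_real, Real.norm_eq_abs]
    have h2 := Complex.norm_exp_sub_one_le (x := (↑(a - b)) * Complex.I)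
      (by rw [h1]; exact hab1)
    rw [h1] at h2
    exact h2
  have hfactor : Complex.exp (↑a * Complex.I) - Complex.exp (↑b * Complex.I)
      = Complex.exp (↑b * Complex.I) * (Complex.exp ((↑(a - b)) * Complex.I) - 1) := by
    rw [mul_sub, mul_one, ← Complex.exp_add]
    push_cast
    ring_nf
  have habε : |a - b| < ε / 2 := by
    have := (lt_min_iff.mp (by simpa [Real.dist_eq] using h)).2
    exact this
  calc dist (Complex.exp (↑a * Complex.I)) (Complex.exp (↑b * Complex.I))
      = ‖Complex.exp (↑a * Complex.I) - Complex.exp (↑b * Complex.I)‖ := by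
        rw [Complex.dist_eq]
    _ = ‖Complex.exp (↑b * Complex.I)‖ *
          ‖Complex.exp ((↑(a - b)) * Complex.I) - 1‖ := by
        rw [hfactor, norm_mul]
    _ ≤ 2 * |a - b| := by
        rw [Complex.norm_exp_ofReal_mul_I, one_mul]; exact key
    _ < ε := by linarith

variable (X : Type*) [UniformSpace X]

/-- The space `UCb(X)` of bounded uniformly continuous complex-valued functions on a
uniform space `X`, realized as a (closed) subspace of the Banach space of bounded
continuous functions, so that it is itself a Banach space with the supremum norm. -/
def UCb : Submodule ℂ (BoundedContinuousFunction X ℂ) where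
  carrier := {f | UniformContinuous f}
  add_mem' := by
    intro f g hf hg
    exact ((hf : UniformContinuous f).add (hg : UniformContinuous g))
  zero_mem' := by
    exact (uniformContinuous_const : UniformContinuous fun _ : X => (0 : ℂ))
  smul_mem' := by
    intro c f hf
    exact ((hf : UniformContinuous f).const_smul c)

variable {X}

/-- For a uniformly continuous function `f : X → ℝ`, the element `e^{if}` of `UCb(X)`. -/
def expICf {f : X → ℝ} (hf : UniformContinuous f) : UCb X :=
  ⟨BoundedContinuousFunction.ofNormedAddCommGroup
      (fun x => Complex.exp ((f x : ℂ) * Complex.I))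
      ((uniformContinuous_exp_mul_I.comp hf).continuous) 1
      (fun x => le_of_eq (Complex.norm_exp_ofReal_mul_I (f x))),
   (uniformContinuous_exp_mul_I.comp hf)⟩

/-- The constant function `1` as an element of `UCb(X)`. -/
def oneUCb : UCb X :=
  ⟨BoundedContinuousFunction.const X (1 : ℂ), by
    exact (uniformContinuous_const : UniformContinuous fun _ : X => (1 : ℂ))⟩

/-- A functional `μ ∈ M(X) = UCb(X)'` is positive if it takes nonnegative (real) values
on nonnegative real-valued functions. -/
def IsPositiveFunctional {X : Type*} [UniformSpace X] (μ : UCb X →L[ℂ] ℂ) : Prop :=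
  ∀ g : UCb X, (∀ x : X, ∃ r : ℝ, 0 ≤ r ∧ (g : BoundedContinuousFunction X ℂ) x = r) →
    ∃ c : ℝ, 0 ≤ c ∧ μ g = c

open ComplexConjugate

lemma conj_expI (t : ℝ) :
    conj (Complex.exp ((t : ℂ) * Complex.I)) = Complex.exp (((-t : ℝ) : ℂ) * Complex.I) := by
  rw [← Complex.exp_conj]; push_cast; simp [Complex.conj_I]

lemma key_identity (a b c : ℂ) (ha : a * conj a = 1) (hb : b * conj b = 1) :
    ((2 : ℂ) + ((‖c‖ ^ 2 : ℝ) : ℂ)) - a * conj b - conj a * b - c * (conj a - conj b)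
        - conj c * (a - b) = ((Complex.normSq (a - b - c) : ℝ) : ℂ) := by
  rw [← Complex.mul_conj]
  have hc : ((‖c‖ ^ 2 : ℝ) : ℂ) = c * conj c := by
    rw [Complex.mul_conj]; norm_cast; rw [Complex.sq_norm]
  rw [hc]
  simp only [map_sub]
  linear_combination (-1 : ℂ) * ha - hb

lemma expICf_apply {f : X → ℝ} (hf : UniformContinuous f) (x : X) :
    ((expICf hf : UCb X) : BoundedContinuousFunction X ℂ) x
      = Complex.exp (((f x : ℝ) : ℂ) * Complex.I) := rfl

lemma oneUCb_apply (x : X) :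
    ((oneUCb (X := X) : UCb X) : BoundedContinuousFunction X ℂ) x = 1 := rfl

/-- A positive functional takes real values on pointwise-real elements of `UCb`. -/
lemma im_mu_eq_zero (μ : UCb X →L[ℂ] ℂ) (hμ : IsPositiveFunctional μ) (g : UCb X)
    (hg : ∀ x, ∃ r : ℝ, (g : BoundedContinuousFunction X ℂ) x = (r : ℂ)) :
    (μ g).im = 0 := by
  obtain ⟨c1, _, h1⟩ := hμ oneUCb (fun x => ⟨1, zero_le_one, rfl⟩)
  set M : ℝ := ‖(g : BoundedContinuousFunction X ℂ)‖ with hM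
  have hpos : ∀ x : X, ∃ s : ℝ, 0 ≤ s ∧
      ((((M : ℂ) • oneUCb + g : UCb X)) : BoundedContinuousFunction X ℂ) x = (s : ℂ) := by
    intro x
    obtain ⟨r, hr⟩ := hg x
    have hb : ‖(g : BoundedContinuousFunction X ℂ) x‖ ≤ M :=
      BoundedContinuousFunction.norm_coe_le_norm _ x
    rw [hr] at hb
    simp only [Complex.norm_real, Real.norm_eq_abs] at hb
    refine ⟨M + r, by linarith [neg_abs_le r], ?_⟩
    have : ((((M : ℂ) • oneUCb + g : UCb X)) : BoundedContinuousFunction X ℂ) x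
        = (M : ℂ) * 1 + (r : ℂ) := by
      push_cast [Submodule.coe_add, Submodule.coe_smul]
      simp [oneUCb_apply, hr]
    rw [this]; push_cast; try ring
  obtain ⟨c2, _, h2⟩ := hμ ((M : ℂ) • oneUCb + g) hpos
  have hexp : μ ((M : ℂ) • oneUCb + g) = (M : ℂ) * μ oneUCb + μ g := by
    rw [map_add, map_smul]; rfl
  rw [h2, h1] at hexp
  have : μ g = (c2 : ℂ) - (M : ℂ) * (c1 : ℂ) := by rw [hexp]; ring
  rw [this]; simp


set_option maxHeartbeats 1600000 in
/-- For a positive functional `μ ∈ M⁺(X)` and uniformly continuous `f, h : X → ℝ` one has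
`|(Fμ)(f) − (Fμ)(h)|² ≤ 2⟨μ,1⟩(⟨μ,1⟩ − Re (Fμ)(f−h))`, where `(Fμ)(f) = ⟨μ, e^{if}⟩`. -/
theorem fourier_dist_sq_le_of_positive {X : Type*} [UniformSpace X] [T2Space X]
    (μ : UCb X →L[ℂ] ℂ) (hμ : IsPositiveFunctional μ)
    (f h : X → ℝ) (hf : UniformContinuous f) (hh : UniformContinuous h) :
    ‖μ (expICf hf) - μ (expICf hh)‖ ^ 2 ≤
      2 * (μ (oneUCb (X := X))).re *
        ((μ (oneUCb (X := X))).re - (μ (expICf (hf.sub hh))).re) := by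
  obtain ⟨m, hm0, hm⟩ := hμ oneUCb (fun x => ⟨1, zero_le_one, rfl⟩)
  set A := expICf hf with hAdef
  set B := expICf hh with hBdef
  set A' := expICf hf.neg with hA'def
  set B' := expICf hh.neg with hB'def
  set P := expICf (hf.sub hh) with hPdef
  set Q := expICf (hh.sub hf) with hQdef
  set z : ℂ := μ A - μ B with hzdef
  have unit : ∀ t : ℝ, Complex.exp ((t : ℂ) * Complex.I) *
      conj (Complex.exp ((t : ℂ) * Complex.I)) = 1 := fun t => by
    rw [conj_expI, ← Complex.exp_add, ← Complex.exp_zero]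
    congr 1; push_cast; ring
  have vA : ∀ x, ((A : UCb X) : BoundedContinuousFunction X ℂ) x
      = Complex.exp ((f x : ℂ) * Complex.I) := fun x => rfl
  have vB : ∀ x, ((B : UCb X) : BoundedContinuousFunction X ℂ) x
      = Complex.exp ((h x : ℂ) * Complex.I) := fun x => rfl
  have vA' : ∀ x, ((A' : UCb X) : BoundedContinuousFunction X ℂ) x
      = conj (Complex.exp ((f x : ℂ) * Complex.I)) := fun x => (conj_expI (f x)).symm
  have vB' : ∀ x, ((B' : UCb X) : BoundedContinuousFunction X ℂ) x
      = conj (Complex.exp ((h x : ℂ) * Complex.I)) := fun x => (conj_expI (h x)).symm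
  have vP : ∀ x, ((P : UCb X) : BoundedContinuousFunction X ℂ) x
      = Complex.exp ((f x : ℂ) * Complex.I) * conj (Complex.exp ((h x : ℂ) * Complex.I)) := by
    intro x
    rw [conj_expI, ← Complex.exp_add]
    show Complex.exp (((f x - h x : ℝ) : ℂ) * Complex.I) = _
    congr 1; push_cast; ring
  have vQ : ∀ x, ((Q : UCb X) : BoundedContinuousFunction X ℂ) x
      = conj (Complex.exp ((f x : ℂ) * Complex.I)) * Complex.exp ((h x : ℂ) * Complex.I) := by
    intro x
    rw [conj_expI, ← Complex.exp_add]
    show Complex.exp (((h x - f x : ℝ) : ℂ) * Complex.I) = _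
    congr 1; push_cast; ring
  -- μ A' - μ B' = conj z
  have hz' : μ A' - μ B' = conj z := by
    have h1 : (μ (A - B + (A' - B'))).im = 0 := by
      apply im_mu_eq_zero μ hμ
      intro x
      refine ⟨2 * ((Complex.exp ((f x : ℂ) * Complex.I)
        - Complex.exp ((h x : ℂ) * Complex.I)).re), ?_⟩
      have : (((A - B + (A' - B') : UCb X)) : BoundedContinuousFunction X ℂ) x
          = (Complex.exp ((f x : ℂ) * Complex.I) - Complex.exp ((h x : ℂ) * Complex.I))
            + conj (Complex.exp ((f x : ℂ) * Complex.I) - Complex.exp ((h x : ℂ) * Complex.I)) := by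
        push_cast [Submodule.coe_add, Submodule.coe_sub]
        simp [vA, vB, vA', vB', map_sub]
      rw [this, Complex.add_conj]; try push_cast; try ring
    have h2 : (μ (Complex.I • (A - B - (A' - B')))).im = 0 := by
      apply im_mu_eq_zero μ hμ
      intro x
      refine ⟨-(2 * ((Complex.exp ((f x : ℂ) * Complex.I)
        - Complex.exp ((h x : ℂ) * Complex.I)).im)), ?_⟩
      have hval : (((Complex.I • (A - B - (A' - B')) : UCb X)) : BoundedContinuousFunction X ℂ) x
          = Complex.I * ((Complex.exp ((f x : ℂ) * Complex.I) - Complex.exp ((h x : ℂ) * Complex.I))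
            - conj (Complex.exp ((f x : ℂ) * Complex.I) - Complex.exp ((h x : ℂ) * Complex.I))) := by
        push_cast [Submodule.coe_add, Submodule.coe_sub, Submodule.coe_smul]
        simp [vA, vB, vA', vB', map_sub]
        try ring
      rw [hval, Complex.sub_conj]; try push_cast
      try rw [mul_comm]
      try rw [mul_assoc, Complex.I_mul_I]
      try ring
    simp only [map_add, map_sub, map_smul, smul_eq_mul] at h1 h2
    simp only [Complex.add_im, Complex.sub_im, Complex.mul_im, Complex.I_re, Complex.I_im,
      Complex.sub_re, Complex.mul_re, zero_mul, one_mul, zero_sub, zero_add] at h1 h2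
    apply Complex.ext <;>
      simp only [Complex.conj_re, Complex.conj_im, Complex.sub_re, Complex.sub_im, hzdef] <;>
      linarith
  -- μ Q = conj (μ P)
  have hQc : μ Q = conj (μ P) := by
    have h1 : (μ (P + Q)).im = 0 := by
      apply im_mu_eq_zero μ hμ
      intro x
      refine ⟨2 * ((Complex.exp ((f x : ℂ) * Complex.I)
        * conj (Complex.exp ((h x : ℂ) * Complex.I))).re), ?_⟩
      have : (((P + Q : UCb X)) : BoundedContinuousFunction X ℂ) x
          = (Complex.exp ((f x : ℂ) * Complex.I) * conj (Complex.exp ((h x : ℂ) * Complex.I)))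
            + conj (Complex.exp ((f x : ℂ) * Complex.I)
              * conj (Complex.exp ((h x : ℂ) * Complex.I))) := by
        push_cast [Submodule.coe_add]
        simp [vP, vQ, map_mul]
        try ring
      rw [this, Complex.add_conj]; try push_cast; try ring
    have h2 : (μ (Complex.I • (P - Q))).im = 0 := by
      apply im_mu_eq_zero μ hμ
      intro x
      refine ⟨-(2 * ((Complex.exp ((f x : ℂ) * Complex.I)
        * conj (Complex.exp ((h x : ℂ) * Complex.I))).im)), ?_⟩
      have hval : (((Complex.I • (P - Q) : UCb X)) : BoundedContinuousFunction X ℂ) x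
          = Complex.I * ((Complex.exp ((f x : ℂ) * Complex.I)
              * conj (Complex.exp ((h x : ℂ) * Complex.I)))
            - conj (Complex.exp ((f x : ℂ) * Complex.I)
              * conj (Complex.exp ((h x : ℂ) * Complex.I)))) := by
        push_cast [Submodule.coe_sub, Submodule.coe_smul]
        simp [vP, vQ, map_mul]
        try ring
      rw [hval, Complex.sub_conj]; try push_cast
      try rw [mul_comm]
      try rw [mul_assoc, Complex.I_mul_I]
      try ring
    simp only [map_add, map_sub, map_smul, smul_eq_mul] at h1 h2
    simp only [Complex.add_im, Complex.sub_im, Complex.mul_im, Complex.I_re, Complex.I_im,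
      Complex.sub_re, Complex.mul_re, zero_mul, one_mul, zero_sub, zero_add] at h1 h2
    apply Complex.ext <;>
      simp only [Complex.conj_re, Complex.conj_im] <;> linarith
  -- the quadratic inequality
  have key : ∀ t : ℝ, 0 ≤ (m * ‖z‖ ^ 2) * t ^ 2 + (-(2 * ‖z‖ ^ 2)) * t
      + (2 * m - 2 * (μ P).re) := by
    intro t
    set c : ℂ := (t : ℂ) * z with hcdef
    have hpos : ∀ x : X, ∃ r : ℝ, 0 ≤ r ∧
        (((((2 + ‖c‖ ^ 2 : ℝ) : ℂ) • oneUCb - P - Q - c • (A' - B')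
          - conj c • (A - B) : UCb X)) : BoundedContinuousFunction X ℂ) x = (r : ℂ) := by
      intro x
      refine ⟨Complex.normSq (Complex.exp ((f x : ℂ) * Complex.I)
        - Complex.exp ((h x : ℂ) * Complex.I) - c), Complex.normSq_nonneg _, ?_⟩
      have hval : ((((((2 + ‖c‖ ^ 2 : ℝ) : ℂ) • oneUCb - P - Q - c • (A' - B')
            - conj c • (A - B)) : UCb X)) : BoundedContinuousFunction X ℂ) x
          = ((2 : ℂ) + ((‖c‖ ^ 2 : ℝ) : ℂ))
            - Complex.exp ((f x : ℂ) * Complex.I) * conj (Complex.exp ((h x : ℂ) * Complex.I))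
            - conj (Complex.exp ((f x : ℂ) * Complex.I)) * Complex.exp ((h x : ℂ) * Complex.I)
            - c * (conj (Complex.exp ((f x : ℂ) * Complex.I))
              - conj (Complex.exp ((h x : ℂ) * Complex.I)))
            - conj c * (Complex.exp ((f x : ℂ) * Complex.I)
              - Complex.exp ((h x : ℂ) * Complex.I)) := by
        push_cast [Submodule.coe_add, Submodule.coe_sub, Submodule.coe_smul]
        simp [vA, vB, vA', vB', vP, vQ, oneUCb_apply]
        try push_cast
        try ring
      rw [hval, key_identity _ _ _ (unit (f x)) (unit (h x))]
    obtain ⟨r, hr0, hr⟩ := hμ (((2 + ‖c‖ ^ 2 : ℝ) : ℂ) • oneUCb - P - Q - c • (A' - B')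
      - conj c • (A - B)) hpos
    have hcross1 : c * conj z = ((t * Complex.normSq z : ℝ) : ℂ) := by
      rw [hcdef]; push_cast; rw [mul_assoc, Complex.mul_conj]
    have hcross2 : conj c * z = ((t * Complex.normSq z : ℝ) : ℂ) := by
      rw [hcdef, map_mul, Complex.conj_ofReal]; push_cast
      rw [mul_assoc, mul_comm (conj z) z, Complex.mul_conj]
    have hexp : μ (((2 + ‖c‖ ^ 2 : ℝ) : ℂ) • oneUCb - P - Q - c • (A' - B')
          - conj c • (A - B))
        = ((2 + ‖c‖ ^ 2 : ℝ) : ℂ) * (m : ℂ) - μ P - conj (μ P)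
          - ((t * Complex.normSq z : ℝ) : ℂ) - ((t * Complex.normSq z : ℝ) : ℂ) := by
      simp only [map_sub, map_smul, smul_eq_mul, hm, hQc]
      rw [hz', hcross1, hcross2]
    rw [hr] at hexp
    have hreal : r = (2 + ‖c‖ ^ 2) * m - 2 * (μ P).re - 2 * (t * Complex.normSq z) := by
      have : (r : ℂ) = (((2 + ‖c‖ ^ 2) * m - 2 * (μ P).re - 2 * (t * Complex.normSq z) : ℝ) : ℂ) := by
        rw [hexp]
        apply Complex.ext <;>
          simp [Complex.sub_re, Complex.sub_im, Complex.mul_re, Complex.mul_im,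
            Complex.ofReal_re, Complex.ofReal_im, Complex.conj_re, Complex.conj_im] <;>
          ring
      exact_mod_cast this
    have hnorm : Complex.normSq z = ‖z‖ ^ 2 := by
      rw [Complex.normSq_eq_norm_sq]
    have hc2 : ‖c‖ ^ 2 = t ^ 2 * ‖z‖ ^ 2 := by
      have hcn : ‖c‖ = |t| * ‖z‖ := by
        rw [hcdef, norm_mul, Complex.norm_real, Real.norm_eq_abs]
      rw [hcn, mul_pow, _root_.sq_abs]
    rw [hnorm, hc2] at hreal
    nlinarith [hr0]
  have hD : 0 ≤ 2 * m - 2 * (μ P).re := by simpa using key 0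
  have hdisc := discrim_le_zero (a := m * ‖z‖ ^ 2) (b := -(2 * ‖z‖ ^ 2))
    (c := 2 * m - 2 * (μ P).re) (fun t => by nlinarith [key t, sq_nonneg t])
  rw [discrim] at hdisc
  rw [hm]
  simp only [Complex.ofReal_re]
  rcases eq_or_lt_of_le (sq_nonneg ‖z‖) with hs | hs
  · rw [← hs]
    have : 0 ≤ 2 * m * (m - (μ P).re) := by nlinarith
    linarith
  · nlinarith [hdisc, hs, hm0]

end
end

section
/- Let X be a Hausdorff uniform space. For x ∈ X define η_x : UC(X,ℝ) → ℝ by η_x(f) = f(x). Then each η_x is uniformly continuous on X^∇ (so η_x ∈ (X^∇)^∇), and the resulting map η_X : X → (X^∇)^∇, x ↦ η_x, is injective and uniformly continuous, where both X^∇ = UC(X,ℝ) and (X^∇)^∇ = UC(X^∇,ℝ) carry the uniform structure of pointwise convergence. -/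
noncomputable section

open Filter Set Uniformity

lemma aux_pseudometric {X : Type*} [PseudoMetricSpace X] {x y : X} {V : Set (X × X)}
    (hV : V ∈ 𝓤 X) (hxy : (x, y) ∉ V) :
    ∃ f : X → ℝ, UniformContinuous f ∧ f x ≠ f y := by
  refine ⟨dist x, uniformContinuous_const.dist uniformContinuous_id, fun h => hxy ?_⟩
  obtain ⟨ε, εpos, hε⟩ := Metric.mem_uniformity_dist.1 hV
  exact hε (show dist x y < ε by rw [← h, dist_self]; exact εpos)

lemma aux_countable {X : Type*} [U : UniformSpace X] [(𝓤 X).IsCountablyGenerated]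
    {x y : X} {V : Set (X × X)} (hV : V ∈ 𝓤 X) (hxy : (x, y) ∉ V) :
    ∃ f : X → ℝ, UniformContinuous f ∧ f x ≠ f y := by
  obtain ⟨I, hI⟩ := UniformSpace.metrizable_uniformity X
  subst hI
  exact aux_pseudometric hV hxy

/-- On a Hausdorff uniform space, uniformly continuous real functions separate points. -/
lemma exists_uc_sep {X : Type*} [uX : UniformSpace X] [T2Space X] {x y : X} (hxy : x ≠ y) :
    ∃ f : X → ℝ, UniformContinuous f ∧ f x ≠ f y := by
  obtain ⟨V, hV, hxyV⟩ : ∃ V ∈ 𝓤 X, (x, y) ∉ V := by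
    by_contra h
    push_neg at h
    exact hxy (inseparable_iff_ker_uniformity.mpr h).eq
  choose! t ht hsymm hcomp using fun s (hs : s ∈ 𝓤 X) => comp_symm_mem_uniformity_sets hs
  have hsub : ∀ s, s ∈ 𝓤 X → t s ⊆ s := by
    intro s hs p hp
    exact hcomp s hs ⟨p.1, refl_mem_uniformity (ht s hs), hp⟩
  set W : ℕ → Set (X × X) := fun n => (fun s => t s)^[n] (t V) with hW_def
  have hWsucc : ∀ n, W (n + 1) = t (W n) := fun n => Function.iterate_succ_apply' _ n _
  have hW : ∀ n, W n ∈ 𝓤 X := by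
    intro n
    induction n with
    | zero => exact ht V hV
    | succ n ih => rw [hWsucc]; exact ht _ ih
  have hWsym : ∀ n, SetRel.IsSymm (W n) := by
    intro n
    cases n with
    | zero => exact hsymm V hV
    | succ n => rw [hWsucc]; exact hsymm _ (hW n)
  have hWanti : Antitone W :=
    antitone_nat_of_succ_le fun n => (hWsucc n) ▸ hsub _ (hW n)
  set F : Filter (X × X) := ⨅ n, 𝓟 (W n) with hF_def
  have hbasis : F.HasBasis (fun _ : ℕ => True) W :=
    hasBasis_iInf_principal hWanti.directed_ge
  have hmemW : ∀ n, W n ∈ F := fun n => hbasis.mem_of_mem trivial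
  have hle : 𝓤 X ≤ F := le_iInf fun n => le_principal_iff.2 (hW n)
  let core : UniformSpace.Core X := UniformSpace.Core.mk' F
    (fun r hr z => refl_mem_uniformity (hle hr))
    (fun r hr => by
      obtain ⟨n, -, hn⟩ := hbasis.mem_iff.1 hr
      exact mem_of_superset (hmemW n) fun p hp => hn (by haveI := hWsym n; exact SetRel.symm (R := W n) hp))
    (fun r hr => by
      obtain ⟨n, -, hn⟩ := hbasis.mem_iff.1 hr
      refine ⟨W (n + 1), hmemW _, ?_⟩
      rw [hWsucc]
      exact (hcomp _ (hW n)).trans hn)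
  let U : UniformSpace X := UniformSpace.ofCore core
  have hUF : 𝓤[U] = F := rfl
  haveI hcg : (𝓤[U]).IsCountablyGenerated := by
    rw [hUF, hF_def]; infer_instance
  have hVU : V ∈ 𝓤[U] := by
    rw [hUF]
    exact mem_of_superset (hmemW 0) (hsub V hV)
  obtain ⟨f, hf, hfxy⟩ := @aux_countable X U hcg x y V hVU hxyV
  refine ⟨f, ?_, hfxy⟩
  have hf' : Tendsto (fun p : X × X => (f p.1, f p.2)) F (𝓤 ℝ) := hf
  exact hf'.mono_left hle

/-- The uniform space dual `Y^∇ = UC(Y,ℝ)`, endowed with the uniform structure of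
pointwise convergence (as a uniform subspace of the product `ℝ^Y`). -/
def UCdual (Y : Type*) [UniformSpace Y] : Type _ := {f : Y → ℝ // UniformContinuous f}

instance (Y : Type*) [UniformSpace Y] : UniformSpace (UCdual Y) :=
  instUniformSpaceSubtype

/-- For a Hausdorff uniform space `X`, each evaluation map `η_x : X^∇ → ℝ`,
`η_x(f) = f(x)`, is uniformly continuous (so `η_x ∈ (X^∇)^∇`), and the resulting map
`η_X : X → (X^∇)^∇`, `x ↦ η_x`, is injective and uniformly continuous, where both
`X^∇` and `(X^∇)^∇` carry the uniform structure of pointwise convergence. -/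
theorem eta_injective_uniformContinuous (X : Type*) [UniformSpace X] [T2Space X] :
    (∀ x : X, UniformContinuous fun f : UCdual X => f.1 x) ∧
    Function.Injective (fun (x : X) => fun f : UCdual X => f.1 x) ∧
    UniformContinuous (fun (x : X) => fun f : UCdual X => f.1 x) := by
  refine ⟨?_, ?_, ?_⟩
  · intro x
    exact (Pi.uniformContinuous_proj (fun _ : X => ℝ) x).comp
      (uniformContinuous_subtype_val (p := fun f : X → ℝ => UniformContinuous f))
  · intro x y h
    by_contra hxy
    obtain ⟨f, hf, hfxy⟩ := exists_uc_sep hxy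
    exact hfxy (congrFun h ⟨f, hf⟩)
  · exact uniformContinuous_pi.2 fun f => f.2

end
end
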